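/- arXiv:0906.2888 — 2 statements merged into one kernel-verified Lean document; each statement's English description precedes it below -/
import Mathlib

section
/- Let c_n = (2/π)∫_{-1}^{1} (1-x²)^{-1/4}·T_n(x)/√(1-x²) dx be the Chebyshev coefficients of f(x) = (1-x²)^{-1/4}. Then (2n+3)·c_{n+2} = (2n+1)·c_n for all n ≥ 0. -/
open Polynomial Polynomial.Chebyshev

section ChebAux

open MeasureTheory intervalIntegral Set

noncomputable def chebH (k : ℕ) (x : ℝ) : ℝ :=
  (1 - x ^ 2) ^ (-(3 / 4 : ℝ)) * (T ℝ k).eval x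

lemma cheb_rpow_bound {a b : ℝ} (ha : 0 ≤ a) (hb : 1 ≤ b) :
    (a * b) ^ (-(3 / 4 : ℝ)) ≤ a ^ (-(3 / 4 : ℝ)) := by
  rw [Real.mul_rpow ha (by linarith)]
  calc a ^ (-(3/4:ℝ)) * b ^ (-(3/4:ℝ)) ≤ a ^ (-(3/4:ℝ)) * 1 := by
        exact mul_le_mul_of_nonneg_left
          (Real.rpow_le_one_of_one_le_of_nonpos hb (by norm_num))
          (Real.rpow_nonneg ha _)
    _ = a ^ (-(3/4:ℝ)) := mul_one _

lemma cheb_w_integrable :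
    IntervalIntegrable (fun x : ℝ => (1 - x ^ 2) ^ (-(3 / 4 : ℝ)))
      MeasureTheory.volume (-1) 1 := by
  have hmeas : Measurable (fun x : ℝ => (1 - x ^ 2) ^ (-(3 / 4 : ℝ))) := by
    fun_prop
  rw [intervalIntegrable_iff_integrableOn_Ioc_of_le (by norm_num)]
  have hsplit : (Ioc (-1:ℝ) 1) = Ioc (-1) 0 ∪ Ioc 0 1 :=
    (Ioc_union_Ioc_eq_Ioc (by norm_num) (by norm_num)).symm
  rw [hsplit]
  apply MeasureTheory.IntegrableOn.union
  · -- on Ioc (-1) 0, dominate by (1+x)^(-3/4)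
    have hg : MeasureTheory.IntegrableOn (fun x : ℝ => (1 + x) ^ (-(3/4:ℝ)))
        (Ioc (-1) 0) MeasureTheory.volume := by
      have h0 := (intervalIntegral.intervalIntegrable_rpow' (a := 0) (b := 1)
        (r := -(3/4)) (by norm_num)).comp_add_left 1
      norm_num at h0
      rw [intervalIntegrable_iff_integrableOn_Ioc_of_le (by norm_num)] at h0
      exact h0
    apply MeasureTheory.Integrable.mono hg hmeas.aestronglyMeasurable.restrict
    filter_upwards [MeasureTheory.ae_restrict_mem measurableSet_Ioc] with x hx
    have hx1 : (-1:ℝ) < x := hx.1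
    have hx2 : x ≤ 0 := hx.2
    have h1 : (0:ℝ) ≤ 1 + x := by linarith
    have h2 : (1:ℝ) ≤ 1 - x := by linarith
    have hfac : 1 - x ^ 2 = (1 + x) * (1 - x) := by ring
    rw [Real.norm_eq_abs, Real.norm_eq_abs, abs_of_nonneg (Real.rpow_nonneg (by nlinarith) _),
      abs_of_nonneg (Real.rpow_nonneg h1 _), hfac]
    exact cheb_rpow_bound h1 h2
  · have hg : MeasureTheory.IntegrableOn (fun x : ℝ => (1 - x) ^ (-(3/4:ℝ)))
        (Ioc 0 1) MeasureTheory.volume := by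
      have h0 := (intervalIntegral.intervalIntegrable_rpow' (a := 0) (b := 1)
        (r := -(3/4)) (by norm_num)).comp_sub_left 1
      replace h0 := h0.symm
      norm_num at h0
      rw [intervalIntegrable_iff_integrableOn_Ioc_of_le (by norm_num)] at h0
      exact h0
    apply MeasureTheory.Integrable.mono hg hmeas.aestronglyMeasurable.restrict
    filter_upwards [MeasureTheory.ae_restrict_mem measurableSet_Ioc] with x hx
    have hx1 : (0:ℝ) < x := hx.1
    have hx2 : x ≤ 1 := hx.2
    have h1 : (0:ℝ) ≤ 1 - x := by linarith
    have h2 : (1:ℝ) ≤ 1 + x := by linarith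
    have hfac : 1 - x ^ 2 = (1 - x) * (1 + x) := by ring
    rw [Real.norm_eq_abs, Real.norm_eq_abs, abs_of_nonneg (Real.rpow_nonneg (by nlinarith) _),
      abs_of_nonneg (Real.rpow_nonneg h1 _), hfac]
    exact cheb_rpow_bound h1 h2

lemma chebH_integrable (k : ℕ) :
    IntervalIntegrable (chebH k) MeasureTheory.volume (-1) 1 :=
  cheb_w_integrable.mul_continuousOn (Polynomial.continuous _).continuousOn

lemma cheb_evalid (n : ℕ) (x : ℝ) :
    (2 * (n:ℝ) + 3) * (T ℝ (n + 2)).eval x - (2 * (n:ℝ) + 1) * (T ℝ n).eval x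
      = 2 * x * (T ℝ (n + 1)).eval x
        - 4 * (1 - x ^ 2) * ((derivative (T ℝ ((n:ℤ) + 1))).eval x) := by
  have H := congrArg (Polynomial.eval x)
    (one_sub_X_sq_mul_derivative_T_eq_poly_in_T (R := ℝ) (n : ℤ))
  have H2 := congrArg (Polynomial.eval x) (T_add_two ℝ (n : ℤ))
  simp only [eval_mul, eval_sub, eval_add, eval_one, eval_pow, eval_X, eval_intCast,
    eval_ofNat, eval_natCast, Int.cast_natCast, Int.cast_add, Int.cast_one] at H H2
  linear_combination 4 * H + (2 * (n:ℝ) + 3) * H2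

lemma cheb_ftc (n : ℕ) :
    ∫ x in (-1:ℝ)..1,
      ((2 * (n:ℝ) + 3) * chebH (n + 2) x - (2 * (n:ℝ) + 1) * chebH n x) = 0 := by
  set G : ℝ → ℝ := fun x => (-4) * ((1 - x ^ 2) ^ ((1/4 : ℝ)) * (T ℝ (n + 1)).eval x) with hG
  have hcont : ContinuousOn G (Icc (-1) 1) := by
    apply Continuous.continuousOn
    apply continuous_const.mul
    exact ((Continuous.rpow_const (by continuity) fun x => Or.inr (by norm_num)).mul
      (Polynomial.continuous _))
  have hderiv : ∀ x ∈ Ioo (-1:ℝ) 1,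
      HasDerivAt G ((2 * (n:ℝ) + 3) * chebH (n + 2) x - (2 * (n:ℝ) + 1) * chebH n x) x := by
    intro x hx
    have hy : (0:ℝ) < 1 - x ^ 2 := by nlinarith [hx.1, hx.2]
    have h1 : HasDerivAt (fun x : ℝ => 1 - x ^ 2) (-(2 * x)) x := by
      simpa using (hasDerivAt_pow 2 x).const_sub 1
    have h2 : HasDerivAt (fun y : ℝ => y ^ (1/4:ℝ))
        ((1/4) * (1 - x ^ 2) ^ ((1/4:ℝ) - 1)) (1 - x ^ 2) :=
      Real.hasDerivAt_rpow_const (Or.inl hy.ne')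
    have h3 := h2.comp x h1
    have h4 := (T ℝ (n + 1)).hasDerivAt x
    have h5 := (h3.mul h4).const_mul (-4 : ℝ)
    refine h5.congr_deriv ?_
    symm
    simp only [Function.comp_apply]
    have hsplit : (1 - x ^ 2) ^ ((1/4:ℝ))
        = (1 - x ^ 2) * (1 - x ^ 2) ^ (-(3/4 : ℝ)) := by
      have h6 := Real.rpow_add hy 1 (-(3/4))
      rw [Real.rpow_one] at h6
      norm_num at h6 ⊢
      exact h6
    rw [show ((1:ℝ)/4 - 1) = -(3/4 : ℝ) by norm_num, hsplit]
    have key := cheb_evalid n x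
    simp only [chebH]
    push_cast at key ⊢
    linear_combination ((1 - x ^ 2) ^ (-(3/4:ℝ))) * key
  have hint := ((chebH_integrable (n + 2)).const_mul (2 * (n:ℝ) + 3)).sub
    ((chebH_integrable n).const_mul (2 * (n:ℝ) + 1))
  have hFTC := intervalIntegral.integral_eq_sub_of_hasDeriv_right_of_le (by norm_num)
    hcont (fun x hx => (hderiv x hx).hasDerivWithinAt) hint
  rw [hFTC]
  have e1 : G 1 = 0 := by
    simp [hG, Real.zero_rpow (by norm_num : (1/4:ℝ) ≠ 0)]
  have e2 : G (-1) = 0 := by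
    simp [hG, Real.zero_rpow (by norm_num : (1/4:ℝ) ≠ 0)]
  rw [e1, e2, sub_zero]

lemma cheb_integrand_eq (k : ℕ) :
    (∫ x in (-1:ℝ)..1,
      (1 - x ^ 2) ^ (-(1 / 4 : ℝ)) * (T ℝ k).eval x / Real.sqrt (1 - x ^ 2))
    = ∫ x in (-1:ℝ)..1, chebH k x := by
  apply intervalIntegral.integral_congr
  intro x hx
  rw [Set.uIcc_of_le (by norm_num : (-1:ℝ) ≤ 1)] at hx
  have h0 : (0:ℝ) ≤ 1 - x ^ 2 := by nlinarith [hx.1, hx.2]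
  rcases eq_or_lt_of_le h0 with h | h
  · simp only [chebH]
    rw [← h]
    simp [Real.zero_rpow]
  · have hsq : Real.sqrt (1 - x ^ 2) = (1 - x ^ 2) ^ ((1/2:ℝ)) := Real.sqrt_eq_rpow _
    have hkey : (1 - x ^ 2) ^ (-(3/4:ℝ))
        = (1 - x ^ 2) ^ (-(1/4:ℝ)) / (1 - x ^ 2) ^ ((1/2:ℝ)) := by
      rw [← Real.rpow_sub h]; norm_num
    simp only [chebH]
    rw [hkey, hsq]
    ring

end ChebAux

theorem chebyshev_coeff_recurrence_quarter_pow
    (c : ℕ → ℝ)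
    (hc : ∀ n : ℕ, c n =
      (2 / Real.pi) *
        ∫ x in (-1 : ℝ)..1,
          (1 - x ^ 2) ^ (-(1 / 4 : ℝ)) * (T ℝ n).eval x / Real.sqrt (1 - x ^ 2))
    (n : ℕ) :
    (2 * (n : ℝ) + 3) * c (n + 2) = (2 * (n : ℝ) + 1) * c n := by
  rw [hc (n + 2), hc n, cheb_integrand_eq, cheb_integrand_eq]
  have h1 : (∫ x in (-1:ℝ)..1,
        ((2 * (n:ℝ) + 3) * chebH (n + 2) x - (2 * (n:ℝ) + 1) * chebH n x))
      = (2 * (n:ℝ) + 3) * (∫ x in (-1:ℝ)..1, chebH (n + 2) x)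
        - (2 * (n:ℝ) + 1) * (∫ x in (-1:ℝ)..1, chebH n x) := by
    rw [intervalIntegral.integral_sub ((chebH_integrable (n + 2)).const_mul _)
      ((chebH_integrable n).const_mul _),
      intervalIntegral.integral_const_mul, intervalIntegral.integral_const_mul]
  have h2 := cheb_ftc n
  rw [h1] at h2
  have hkey : (2 * (n:ℝ) + 3) * (∫ x in (-1:ℝ)..1, chebH (n + 2) x)
      = (2 * (n:ℝ) + 1) * (∫ x in (-1:ℝ)..1, chebH n x) := by linarith
  linear_combination (2 / Real.pi) * hkey
end

section
/- The Chebyshev coefficients of f(x) = (1-x²)^{-1/4} are given by: c_n = 0 if n is odd, and c_n = 2·Γ(n/2 + 1/4)/(√π·Γ(n/2 + 3/4)) if n is even, where c_n = (2/π)∫_{-1}^{1} (1-x²)^{-3/4}·T_n(x) dx. -/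
open Polynomial Polynomial.Chebyshev

section ChebyshevCoeffAux

open MeasureTheory intervalIntegral Set

/-- The weight function `(1 - x²)^(-3/4)`. -/
noncomputable def chebW (x : ℝ) : ℝ := (1 - x ^ 2) ^ (-(3 / 4 : ℝ))

/-- The integral `∫_{-1}^{1} (1-x²)^{-3/4} T_k(x) dx`. -/
noncomputable def chebI (k : ℤ) : ℝ := ∫ x in (-1:ℝ)..1, chebW x * (T ℝ k).eval x

lemma chebW_neg (x : ℝ) : chebW (-x) = chebW x := by simp [chebW]

lemma chebW_contOn : ContinuousOn chebW (Ioo (-1 : ℝ) 1) := by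
  intro x hx
  have h : (0:ℝ) < 1 - x ^ 2 := by nlinarith [hx.1, hx.2]
  exact (((by fun_prop : ContinuousAt (fun x : ℝ => 1 - x ^ 2) x)).rpow_const
    (Or.inl h.ne')).continuousWithinAt

lemma chebW_int01 : IntervalIntegrable chebW volume 0 1 := by
  have hmaj : IntervalIntegrable (fun x : ℝ => (1 - x) ^ (-(3/4 : ℝ))) volume 0 1 := by
    have := (intervalIntegrable_rpow' (r := -(3/4)) (by norm_num) (a := 1) (b := 0)).comp_sub_left 1
    simpa using this
  have huIoc : Set.uIoc (0:ℝ) 1 = Set.Ioc 0 1 := Set.uIoc_of_le (by norm_num)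
  apply hmaj.mono_fun
  · rw [huIoc, ← MeasureTheory.restrict_Ioo_eq_restrict_Ioc]
    exact (chebW_contOn.mono (by intro x hx; exact ⟨by linarith [hx.1], hx.2⟩)).aestronglyMeasurable
      measurableSet_Ioo
  · rw [huIoc]
    filter_upwards [ae_restrict_mem measurableSet_Ioc] with x hx
    obtain ⟨hx0, hx1⟩ := hx
    have h1 : (0:ℝ) ≤ 1 - x := by linarith
    have key : chebW x ≤ (1 - x) ^ (-(3/4 : ℝ)) := by
      have e : (1 : ℝ) - x ^ 2 = (1 - x) * (1 + x) := by ring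
      rw [chebW, e, Real.mul_rpow h1 (by linarith)]
      calc (1-x) ^ (-(3/4:ℝ)) * (1+x) ^ (-(3/4:ℝ))
          ≤ (1-x) ^ (-(3/4:ℝ)) * 1 :=
            mul_le_mul_of_nonneg_left
              (Real.rpow_le_one_of_one_le_of_nonpos (by linarith) (by norm_num))
              (Real.rpow_nonneg h1 _)
        _ = (1-x) ^ (-(3/4:ℝ)) := mul_one _
    have hw0 : 0 ≤ chebW x := Real.rpow_nonneg (by nlinarith) _
    simp only [Real.norm_eq_abs]
    rw [abs_of_nonneg hw0, abs_of_nonneg (Real.rpow_nonneg h1 _)]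
    exact key

lemma chebW_intNeg : IntervalIntegrable chebW volume (-1) 0 := by
  have := ((IntervalIntegrable.iff_comp_neg).mp chebW_int01)
  simp only [chebW_neg, neg_zero] at this
  exact this.symm

lemma chebW_int : IntervalIntegrable chebW volume (-1) 1 := chebW_intNeg.trans chebW_int01

lemma chebW_polyInt (p : ℝ[X]) :
    IntervalIntegrable (fun x => chebW x * p.eval x) volume (-1) 1 :=
  chebW_int.mul_continuousOn (Polynomial.continuousOn p)

lemma cheb_g_hasDeriv (k : ℤ) {x : ℝ} (hx : x ∈ Ioo (-1:ℝ) 1) :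
    HasDerivAt (fun y => (1 - y ^ 2) ^ ((1:ℝ)/4) * (T ℝ k).eval y)
      (((k:ℝ)/2 - 1/4) * (chebW x * (T ℝ (k-1)).eval x)
        - ((k:ℝ)/2 + 1/4) * (chebW x * (T ℝ (k+1)).eval x)) x := by
  have hpos : (0:ℝ) < 1 - x ^ 2 := by nlinarith [hx.1, hx.2]
  have h1 : HasDerivAt (fun y : ℝ => 1 - y ^ 2) (-(2*x)) x := by
    simpa using ((hasDerivAt_pow 2 x).const_sub 1)
  have h2 : HasDerivAt (fun y : ℝ => (1 - y ^ 2) ^ ((1:ℝ)/4))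
      (-(2*x) * ((1:ℝ)/4) * (1 - x^2) ^ ((1:ℝ)/4 - 1)) x :=
    h1.rpow_const (Or.inl hpos.ne')
  have h4 := h2.mul (Polynomial.hasDerivAt (T ℝ k) x)
  convert h4 using 1
  · rfl
  · rfl
  · rfl
  have e1 : (1 - x^2) ^ ((1:ℝ)/4 - 1) = chebW x := by norm_num [chebW]
  have e2 : (1 - x^2) ^ ((1:ℝ)/4) = chebW x * (1 - x^2) := by
    rw [chebW, ← Real.rpow_add_one hpos.ne']; norm_num
  have hp1 := congr_arg (Polynomial.eval x)
    (one_sub_X_sq_mul_derivative_T_eq_poly_in_T (R := ℝ) (k-1))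
  rw [show (k:ℤ) - 1 + 1 = k by ring] at hp1
  simp only [eval_mul, eval_sub, eval_add, eval_one, eval_pow, eval_X, eval_intCast,
    Int.cast_sub, Int.cast_one] at hp1
  have hp2 := congr_arg (Polynomial.eval x) (T_add_two ℝ (k-1))
  rw [show (k:ℤ) - 1 + 2 = k + 1 by ring, show (k:ℤ) - 1 + 1 = k by ring] at hp2
  simp only [eval_mul, eval_sub, eval_ofNat, eval_X] at hp2
  rw [e1, e2]
  linear_combination (-(chebW x)) * hp1 - chebW x * ((k:ℝ)/2 + 1/4) * hp2

lemma chebI_rec (k : ℤ) :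
    ((k:ℝ)/2 + 1/4) * chebI (k+1) = ((k:ℝ)/2 - 1/4) * chebI (k-1) := by
  have hq : Continuous fun y : ℝ => y ^ ((1:ℝ)/4) :=
    continuous_iff_continuousAt.2 fun y => Real.continuousAt_rpow_const y _ (Or.inr (by norm_num))
  have hcont : Continuous fun y : ℝ => (1 - y ^ 2) ^ ((1:ℝ)/4) * (T ℝ k).eval y :=
    (hq.comp (by continuity)).mul (T ℝ k).continuous
  have hints : ∀ m : ℤ, IntervalIntegrable (fun x => chebW x * (T ℝ m).eval x) volume (-1) 1 :=
    fun m => chebW_polyInt (T ℝ m)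
  have hint : IntervalIntegrable
      (fun x => ((k:ℝ)/2 - 1/4) * (chebW x * (T ℝ (k-1)).eval x)
        - ((k:ℝ)/2 + 1/4) * (chebW x * (T ℝ (k+1)).eval x)) volume (-1) 1 :=
    ((hints (k-1)).const_mul _).sub ((hints (k+1)).const_mul _)
  have hftc := integral_eq_sub_of_hasDeriv_right_of_le (by norm_num : (-1:ℝ) ≤ 1)
    hcont.continuousOn (fun x hx => (cheb_g_hasDeriv k hx).hasDerivWithinAt) hint
  have hz : ∀ s : ℝ, s = 1 ∨ s = -1 → (1 - s ^ 2) ^ ((1:ℝ)/4) * (T ℝ k).eval s = 0 := by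
    rintro s (rfl | rfl) <;> norm_num
  rw [hz 1 (Or.inl rfl), hz (-1) (Or.inr rfl), sub_zero] at hftc
  rw [intervalIntegral.integral_sub ((hints (k-1)).const_mul _) ((hints (k+1)).const_mul _),
    intervalIntegral.integral_const_mul, intervalIntegral.integral_const_mul] at hftc
  have : ((k:ℝ)/2 - 1/4) * chebI (k-1) - ((k:ℝ)/2 + 1/4) * chebI (k+1) = 0 := hftc
  linarith

lemma chebI_one : chebI 1 = 0 := by
  have hneg : chebI (-1) = chebI 1 := by unfold chebI; rw [T_neg_one, T_one]
  have h := chebI_rec 0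
  simp only [Int.cast_zero] at h
  rw [zero_add, zero_sub, hneg] at h
  norm_num at h
  linarith

lemma cheb_sq_image : (fun t : ℝ => t ^ 2) '' Ioo 0 1 = Ioo 0 1 := by
  apply Subset.antisymm
  · rintro y ⟨t, ⟨ht0, ht1⟩, rfl⟩
    simp only [Set.mem_Ioo]
    exact ⟨by positivity, by nlinarith⟩
  · rintro y ⟨hy0, hy1⟩
    exact ⟨Real.sqrt y, ⟨Real.sqrt_pos.2 hy0, by simpa using Real.sqrt_lt_sqrt hy0.le hy1⟩,
      Real.sq_sqrt hy0.le⟩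

lemma cheb_beta_eq : (∫ x in (0:ℝ)..1, x ^ (-(1/2:ℝ)) * (1-x) ^ (-(3/4:ℝ)))
    = 2 * ∫ x in (0:ℝ)..1, chebW x := by
  have hder : ∀ t ∈ Ioo (0:ℝ) 1, HasDerivWithinAt (fun t : ℝ => t ^ 2) (2*t) (Ioo 0 1) t := by
    intro t ht
    simpa using ((hasDerivAt_pow 2 t).hasDerivWithinAt)
  have hinj : InjOn (fun t : ℝ => t ^ 2) (Ioo 0 1) := by
    intro a ha b hb h
    simp only at h
    nlinarith [ha.1, hb.1]
  have cov := integral_image_eq_integral_abs_deriv_smul measurableSet_Ioo hder hinj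
    (fun x => x ^ (-(1/2:ℝ)) * (1-x) ^ (-(3/4:ℝ)))
  rw [cheb_sq_image] at cov
  rw [intervalIntegral.integral_of_le zero_le_one, intervalIntegral.integral_of_le zero_le_one,
    ← MeasureTheory.restrict_Ioo_eq_restrict_Ioc, cov, ← MeasureTheory.integral_const_mul]
  apply setIntegral_congr_fun measurableSet_Ioo
  intro t ht
  obtain ⟨ht0, ht1⟩ := ht
  have h1 : ((t:ℝ) ^ 2) ^ (-(1/2:ℝ)) = t⁻¹ := by
    rw [← Real.rpow_natCast t 2, ← Real.rpow_mul ht0.le]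
    norm_num [Real.rpow_neg_one]
  simp only [smul_eq_mul]
  rw [h1, abs_of_pos (by linarith), chebW]
  field_simp

lemma cheb_beta_val : (∫ x in (0:ℝ)..1, x ^ (-(1/2:ℝ)) * (1-x) ^ (-(3/4:ℝ)))
    = Real.sqrt Real.pi * Real.Gamma (1/4) / Real.Gamma (3/4) := by
  set J : ℝ := ∫ x in (0:ℝ)..1, x ^ (-(1/2:ℝ)) * (1-x) ^ (-(3/4:ℝ)) with hJ
  have hB : Complex.betaIntegral (1/2) (1/4) = (J : ℂ) := by
    rw [hJ, ← intervalIntegral.integral_ofReal, Complex.betaIntegral]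
    apply intervalIntegral.integral_congr
    intro x hx
    rw [Set.uIcc_of_le (by norm_num : (0:ℝ) ≤ 1)] at hx
    obtain ⟨hx0, hx1⟩ := hx
    push_cast
    rw [Complex.ofReal_cpow hx0, Complex.ofReal_cpow (by linarith)]
    push_cast
    norm_num
  have hG := Complex.Gamma_mul_Gamma_eq_betaIntegral
    (s := 1/2) (t := 1/4) (by norm_num) (by norm_num)
  rw [hB, show (1/2 + 1/4 : ℂ) = ((3/4 : ℝ) : ℂ) by norm_num,
    show (1/2 : ℂ) = ((1/2 : ℝ) : ℂ) by norm_num,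
    show (1/4 : ℂ) = ((1/4 : ℝ) : ℂ) by norm_num,
    Complex.Gamma_ofReal, Complex.Gamma_ofReal, Complex.Gamma_ofReal] at hG
  have hreal : Real.Gamma (1/2) * Real.Gamma (1/4) = Real.Gamma (3/4) * J := by
    exact_mod_cast hG
  have hpos : (0:ℝ) < Real.Gamma (3/4) := Real.Gamma_pos_of_pos (by norm_num)
  rw [Real.Gamma_one_half_eq] at hreal
  field_simp
  linarith [hreal]

lemma chebI_zero : chebI 0 = Real.sqrt Real.pi * Real.Gamma (1/4) / Real.Gamma (3/4) := by
  have h1 : chebI 0 = ∫ x in (-1:ℝ)..1, chebW x := by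
    unfold chebI; rw [T_zero]; simp
  have h2 : (∫ x in (-1:ℝ)..0, chebW x) = ∫ x in (0:ℝ)..1, chebW x := by
    have h := intervalIntegral.integral_comp_neg (a := 0) (b := 1) chebW
    simp only [chebW_neg, neg_zero] at h
    exact h.symm
  have h3 : chebI 0 = 2 * ∫ x in (0:ℝ)..1, chebW x := by
    rw [h1, ← intervalIntegral.integral_add_adjacent_intervals chebW_intNeg chebW_int01, h2]
    ring
  rw [h3, ← cheb_beta_eq, cheb_beta_val]

lemma chebI_key : ∀ n : ℕ, chebI n = if Odd n then 0 else
    Real.sqrt Real.pi * Real.Gamma ((n:ℝ)/2 + 1/4) / Real.Gamma ((n:ℝ)/2 + 3/4)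
  | 0 => by norm_num [chebI_zero]
  | 1 => by simp [chebI_one]
  | (n+2) => by
    have ih := chebI_key n
    have h := chebI_rec ((n:ℤ)+1)
    rw [show ((n:ℤ)+1+1) = ((n+2 : ℕ) : ℤ) by push_cast; ring,
      show ((n:ℤ)+1-1) = ((n:ℕ) : ℤ) by ring] at h
    push_cast at h
    have hoddiff : Odd (n+2) ↔ Odd n := by simp [Nat.odd_add]
    by_cases hodd : Odd n
    · rw [if_pos (hoddiff.2 hodd)]
      rw [if_pos hodd] at ih
      rw [ih, mul_zero] at h
      push_cast
      rcases mul_eq_zero.mp h with h' | h'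
      · exfalso; nlinarith [Nat.cast_nonneg (α := ℝ) n]
      · exact h'
    · rw [if_neg (fun hc => hodd (hoddiff.1 hc))]
      rw [if_neg hodd] at ih
      rw [ih] at h
      push_cast
      set a : ℝ := (n:ℝ)/2 + 1/4 with ha
      set b : ℝ := (n:ℝ)/2 + 3/4 with hb
      have hapos : (0:ℝ) < a := by rw [ha]; positivity
      have hbpos : (0:ℝ) < b := by rw [hb]; positivity
      rw [show ((n:ℝ)+2)/2 + 1/4 = a + 1 by rw [ha]; ring,
        show ((n:ℝ)+2)/2 + 3/4 = b + 1 by rw [hb]; ring,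
        Real.Gamma_add_one hapos.ne', Real.Gamma_add_one hbpos.ne']
      rw [show ((n:ℝ)+1)/2 + 1/4 = b by rw [hb]; ring,
        show ((n:ℝ)+1)/2 - 1/4 = a by rw [ha]; ring] at h
      have hGb : Real.Gamma b ≠ 0 := (Real.Gamma_pos_of_pos hbpos).ne'
      set Ga := Real.Gamma a
      set Gb := Real.Gamma b
      field_simp at h ⊢
      linear_combination h

end ChebyshevCoeffAux

theorem chebyshev_coeff_quarter_pow_closed_form (n : ℕ) :
    (2 / Real.pi) * ∫ x in (-1 : ℝ)..1, (1 - x ^ 2) ^ (-(3 / 4 : ℝ)) * (T ℝ n).eval x =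
      if Odd n then 0
      else 2 * Real.Gamma ((n : ℝ) / 2 + 1 / 4) /
          (Real.sqrt Real.pi * Real.Gamma ((n : ℝ) / 2 + 3 / 4)) := by
  have hI : (∫ x in (-1 : ℝ)..1, (1 - x ^ 2) ^ (-(3 / 4 : ℝ)) * (T ℝ n).eval x)
      = chebI n := rfl
  rw [hI, chebI_key n]
  by_cases hodd : Odd n
  · rw [if_pos hodd, if_pos hodd, mul_zero]
  · rw [if_neg hodd, if_neg hodd]
    have hs : Real.sqrt Real.pi > 0 := Real.sqrt_pos.2 Real.pi_pos
    have hGb : Real.Gamma ((n:ℝ)/2 + 3/4) ≠ 0 :=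
      (Real.Gamma_pos_of_pos (by positivity)).ne'
    have hss : Real.sqrt Real.pi * Real.sqrt Real.pi = Real.pi :=
      Real.mul_self_sqrt Real.pi_pos.le
    set Ga := Real.Gamma ((n:ℝ)/2 + 1/4)
    set Gb := Real.Gamma ((n:ℝ)/2 + 3/4)
    have hpi : Real.pi ≠ 0 := Real.pi_ne_zero
    field_simp
    linear_combination Ga * hss
end
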